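/- arXiv:1201.5820 — 5 statements merged into one kernel-verified Lean document; each statement's English description precedes it below -/
import Mathlib

section
/- For any integers i, j with 0 ≤ j ≤ i, the residue in x0 of (x0-y0)^j · ((x0-y0)^{-i-1} - (-y0+x0)^{-i-1}) equals the Kronecker delta δ_{ij}; and for j > i this residue is 0. Here (x0-y0)^{-i-1} is expanded in nonnegative powers of y0 and (-y0+x0)^{-i-1} in nonnegative powers of x0, and Res_{x0} extracts the coefficient of x0^{-1}. -/
/-- Generalized binomial coefficient `C(n,k) = n(n-1)⋯(n-k+1)/k!` for an integer `n`. -/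
noncomputable def cchoose (n : ℤ) (k : ℕ) : ℂ :=
  (∏ i ∈ Finset.range k, ((n : ℂ) - (i : ℂ))) / (Nat.factorial k : ℂ)

/-- Coefficient of `x0^a y0^b` in `(x0 - y0)^m`, expanded in nonnegative powers of `y0`. -/
noncomputable def binCoeff (m a b : ℤ) : ℂ :=
  if 0 ≤ b ∧ a + b = m then (-1 : ℂ) ^ b * cchoose m b.toNat else 0

/-- Coefficient of `y0^p x0^q` in `(-y0 + x0)^m`, expanded in nonnegative powers of `x0`:
`(-y0+x0)^m = Σ_{q≥0} C(m,q) (-1)^{m-q} y0^{m-q} x0^q`. -/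
noncomputable def negBinCoeff (m p q : ℤ) : ℂ :=
  if 0 ≤ q ∧ p + q = m then (-1 : ℂ) ^ p * cchoose m q.toNat else 0

/-- Coefficient of `y0^b` in
`Res_{x0} (x0-y0)^j ((x0-y0)^{-i-1} - (-y0+x0)^{-i-1})`:
the first term is `(x0-y0)^{j-i-1}` (expanded in nonnegative powers of `y0`), evaluated
at `x0`-exponent `-1`; the second term is the product of the polynomial `(x0-y0)^j`
with `(-y0+x0)^{-i-1}` (expanded in nonnegative powers of `x0`), evaluated at
`x0`-exponent `-1`. -/
noncomputable def resCoeff (i j : ℕ) (b : ℤ) : ℂ :=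
  binCoeff ((j : ℤ) - i - 1) (-1) b -
    ∑ t ∈ Finset.range (j + 1),
      binCoeff (j : ℤ) ((j : ℤ) - t) (t : ℤ) *
        negBinCoeff (-(i : ℤ) - 1) (b - t) (-1 - ((j : ℤ) - t))

lemma cchoose_self_sub_one (k : ℕ) (hk : 0 < k) : cchoose ((k : ℤ) - 1) k = 0 := by
  unfold cchoose
  rw [Finset.prod_eq_zero (Finset.mem_range.mpr (Nat.sub_lt hk one_pos)) (by
    have h1 : 1 ≤ k := hk
    push_cast [Nat.cast_sub h1]
    ring)]
  simp

/-- `Res_{x0} (x0-y0)^j ((x0-y0)^{-i-1} - (-y0+x0)^{-i-1}) = δ_{ij}` for `0 ≤ j ≤ i`,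
and `= 0` for `j > i` (in particular the result vanishes whenever `i ≠ j`). -/
theorem stmt1 (i j : ℕ) (b : ℤ) :
    resCoeff i j b = if b = 0 ∧ i = j then 1 else 0 := by
  have hsum : ∑ t ∈ Finset.range (j + 1),
      binCoeff (j : ℤ) ((j : ℤ) - t) (t : ℤ) *
        negBinCoeff (-(i : ℤ) - 1) (b - t) (-1 - ((j : ℤ) - t)) = 0 := by
    apply Finset.sum_eq_zero
    intro t ht
    have ht' : t < j + 1 := Finset.mem_range.mp ht
    have hneg : ¬ (0 ≤ -1 - ((j : ℤ) - t) ∧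
        (b - t) + (-1 - ((j : ℤ) - t)) = -(i : ℤ) - 1) := by
      rintro ⟨h1, _⟩; omega
    rw [negBinCoeff, if_neg hneg, mul_zero]
  unfold resCoeff
  rw [hsum, sub_zero]
  unfold binCoeff
  by_cases hb : 0 ≤ b ∧ -1 + b = (j : ℤ) - i - 1
  · rw [if_pos hb]
    obtain ⟨h1, h2⟩ := hb
    by_cases hij : i = j
    · have hb0 : b = 0 := by omega
      simp [hb0, hij, cchoose]
    · have hji : i < j := by omega
      rw [if_neg (by tauto)]
      have hk : ((j : ℤ) - i - 1) = ((b.toNat : ℤ)) - 1 := by omega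
      rw [hk, cchoose_self_sub_one b.toNat (by omega)]
      ring
  · rw [if_neg hb, if_neg]
    rintro ⟨hb0, hij⟩
    exact hb ⟨by omega, by omega⟩
end

section
/- Let W be a vector space, r ≥ 1, and let a(x0,x), b(x0,x) ∈ E(W,r) = Hom(W, W[[x1^{±1},…,xr^{±1}]]((x0))). If there is a nonnegative integer k such that (x0-y0)^k a(x0,x) b(y0,y) = (x0-y0)^k b(y0,y) a(x0,x) (mutual locality), then (x0-y0)^k a(x0,x) b(y0,y) lies in Hom(W, W[[x1^{±1},y1^{±1},…,xr^{±1},yr^{±1}]]((x0,y0))), i.e., the pair (a,b) is compatible: applied to any w ∈ W, the x0- and y0-powers appearing are bounded below. -/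
/-- Coefficients of an element of `E(W,r) = Hom(W, W[[x1^{±1},…,xr^{±1}]]((x0)))`:
`A n m` is the coefficient of `x0^{-n-1} x^{-m}`. -/
abbrev ECoeff (r : ℕ) (W : Type*) := ℤ → (Fin r → ℤ) → W → W

/-- Let `W` be a vector space, `r ≥ 1`, and `a, b ∈ E(W,r)`, encoded by their
coefficient functions `A B : ECoeff r W` (linear, with `x0`-powers bounded below on
each vector).  If `(x0-y0)^k a(x0,x) b(y0,y) = (x0-y0)^k b(y0,y) a(x0,x)` (mutual
locality, stated coefficientwise: the displayed sums are the coefficients of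
`x0^P y0^Q x^M y^N`, applied to `w`), then `(x0-y0)^k a(x0,x) b(y0,y)` lies in
`Hom(W, W[[x^{±1}, y^{±1}]]((x0,y0)))`: applied to any `w`, its `x0`- and
`y0`-powers are jointly bounded below. -/
theorem stmt2 (r : ℕ) (hr : 1 ≤ r) (W : Type*) [AddCommGroup W] [Module ℂ W]
    (A B : ECoeff r W)
    (hAlin : ∀ n m, IsLinearMap ℂ (A n m)) (hBlin : ∀ n m, IsLinearMap ℂ (B n m))
    (hAtr : ∀ w : W, ∃ N : ℤ, ∀ n : ℤ, N ≤ n → ∀ m, A n m w = 0)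
    (hBtr : ∀ w : W, ∃ N : ℤ, ∀ n : ℤ, N ≤ n → ∀ m, B n m w = 0)
    (k : ℕ)
    (hloc : ∀ (w : W) (P Q : ℤ) (M N : Fin r → ℤ),
      ∑ t ∈ Finset.range (k+1), ((-1:ℂ)^t * (k.choose t : ℂ)) •
        A ((k:ℤ)-t-P-1) (-M) (B ((t:ℤ)-Q-1) (-N) w)
      = ∑ t ∈ Finset.range (k+1), ((-1:ℂ)^t * (k.choose t : ℂ)) •
        B ((t:ℤ)-Q-1) (-N) (A ((k:ℤ)-t-P-1) (-M) w)) :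
    ∀ w : W, ∃ Nb : ℤ, ∀ (P Q : ℤ) (M N : Fin r → ℤ), (P < Nb ∨ Q < Nb) →
      ∑ t ∈ Finset.range (k+1), ((-1:ℂ)^t * (k.choose t : ℂ)) •
        A ((k:ℤ)-t-P-1) (-M) (B ((t:ℤ)-Q-1) (-N) w) = 0 := by
  intro w
  obtain ⟨NA, hNA⟩ := hAtr w
  obtain ⟨NB, hNB⟩ := hBtr w
  refine ⟨min (-NA) (-NB), ?_⟩
  intro P Q M N h
  rcases h with hP | hQ
  · rw [hloc]
    refine Finset.sum_eq_zero fun t ht => ?_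
    have htk : (t : ℤ) ≤ k := by
      exact_mod_cast Nat.lt_succ_iff.mp (Finset.mem_range.mp ht)
    have hz : A ((k:ℤ)-t-P-1) (-M) w = 0 := by
      apply hNA
      have hP' : P < -NA := lt_of_lt_of_le hP (min_le_left _ _)
      linarith
    rw [hz, (hBlin _ _).map_zero, smul_zero]
  · refine Finset.sum_eq_zero fun t ht => ?_
    have hz : B ((t:ℤ)-Q-1) (-N) w = 0 := by
      apply hNB
      have hQ' : Q < -NB := lt_of_lt_of_le hQ (min_le_right _ _)
      have ht0 : (0:ℤ) ≤ t := Int.ofNat_nonneg t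
      linarith
    rw [hz, (hAlin _ _).map_zero, smul_zero]
end

section
/- Let U be an ordinary vertex algebra with pairwise commuting derivations D_1,…,D_r acting semisimply on U with integer eigenvalues. Define Y(u;x0,x) = Y(x^D u, x0) where x^D = x1^{D_1}⋯xr^{D_r}. Then U with this map and the original vacuum becomes an extended (r+1)-toroidal vertex algebra with D_0 equal to the canonical derivation of U, and moreover U^0 = U (the left ideal generated by the vacuum is all of U). -/
/-- An `(r+1)`-toroidal vertex algebra: a vector space `V` with a linear map
`Y(·;x0,x) : V → Hom(V, V[[x1^{±1},…,xr^{±1}]]((x0)))` (here `Y u n m` is the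
coefficient `u_{n,m}` of `x0^{-n-1} x^{-m}`), a vacuum `vac` with
`Y(vac;x0,x)v = v` and `Y(v;x0,x)vac ∈ V[[x0,x^{±1}]]`, and the Jacobi identity
`z0⁻¹δ((x0-y0)/z0) Y(u;x0,zy)Y(v;y0,y) - z0⁻¹δ((y0-x0)/(-z0)) Y(v;y0,y)Y(u;x0,zy)
 = y0⁻¹δ((x0-z0)/y0) Y(Y(u;z0,z)v;y0,y)`,
stated coefficientwise: the field `jacobi` is the coefficient of
`x0^a y0^b z0^c z^p y^q`, applied to `w`. -/
structure ToroidalVA (r : ℕ) (V : Type*) [AddCommGroup V] [Module ℂ V] where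
  Y : V →ₗ[ℂ] (ℤ → (Fin r → ℤ) → Module.End ℂ V)
  vac : V
  trunc : ∀ u v : V, ∃ N : ℤ, ∀ n : ℤ, N ≤ n → ∀ m : Fin r → ℤ, Y u n m v = 0
  vacuum_prop : ∀ (n : ℤ) (m : Fin r → ℤ) (v : V),
    Y vac n m v = if n = -1 ∧ m = 0 then v else 0
  creation : ∀ (u : V) (n : ℤ) (m : Fin r → ℤ), 0 ≤ n → Y u n m vac = 0
  jacobi : ∀ (u v w : V) (a b c : ℤ) (p q : Fin r → ℤ),
    (∑ᶠ β : ℕ, ((-1 : ℂ) ^ β * cchoose (-c-1) β) •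
        Y u (-a-c-2-(β:ℤ)) (-p) (Y v ((β:ℤ)-b-1) (p-q) w))
    - (∑ᶠ α : ℕ, ((-1 : ℂ) ^ c * (-1 : ℂ) ^ α * cchoose (-c-1) α) •
        Y v (-c-b-(α:ℤ)-2) (p-q) (Y u ((α:ℤ)-a-1) (-p) w))
    = ∑ᶠ γ : ℕ, ((-1 : ℂ) ^ γ * cchoose (a+(γ:ℤ)) γ) •
        Y (Y u ((γ:ℤ)-c-1) (-p) v) (-a-b-(γ:ℤ)-2) (-q) w

/-- An extended `(r+1)`-toroidal vertex algebra: an `(r+1)`-toroidal vertex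
algebra together with operators `D0, D1, …, Dr` killing the vacuum and satisfying
`[D0, Y(v;x0,x)] = Y(D0 v;x0,x) = ∂/∂x0 Y(v;x0,x)` and
`[Dj, Y(v;x0,x)] = Y(Dj v;x0,x) = xj ∂/∂xj Y(v;x0,x)` for `1 ≤ j ≤ r`,
stated on components `Y v n m` (the coefficient of `x0^{-n-1} x^{-m}`). -/
structure ExtToroidalVA (r : ℕ) (V : Type*) [AddCommGroup V] [Module ℂ V]
    extends ToroidalVA r V where
  D0 : Module.End ℂ V
  Dj : Fin r → Module.End ℂ V
  D0_vac : D0 vac = 0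
  Dj_vac : ∀ i, Dj i vac = 0
  D0_comm : ∀ (u : V) (n : ℤ) (m : Fin r → ℤ),
    D0 ∘ₗ Y u n m - Y u n m ∘ₗ D0 = Y (D0 u) n m
  D0_deriv : ∀ (u : V) (n : ℤ) (m : Fin r → ℤ),
    Y (D0 u) n m = ((-n : ℂ)) • Y u (n-1) m
  Dj_comm : ∀ (i : Fin r) (u : V) (n : ℤ) (m : Fin r → ℤ),
    Dj i ∘ₗ Y u n m - Y u n m ∘ₗ Dj i = Y (Dj i u) n m
  Dj_deriv : ∀ (i : Fin r) (u : V) (n : ℤ) (m : Fin r → ℤ),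
    Y (Dj i u) n m = ((-(m i) : ℂ)) • Y u n m

/-- An ordinary vertex algebra, with `Y u n` the coefficient of `x0^{-n-1}`,
the vacuum, truncation, vacuum property, creation property, and the Jacobi
identity stated coefficientwise at `x0^a y0^b z0^c`. -/
structure VertexAlg (V : Type*) [AddCommGroup V] [Module ℂ V] where
  Y : V →ₗ[ℂ] (ℤ → Module.End ℂ V)
  vac : V
  trunc : ∀ u v : V, ∃ N : ℤ, ∀ n : ℤ, N ≤ n → Y u n v = 0
  vacuum_prop : ∀ (n : ℤ) (v : V), Y vac n v = if n = -1 then v else 0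
  creation0 : ∀ (u : V) (n : ℤ), 0 ≤ n → Y u n vac = 0
  creation1 : ∀ u : V, Y u (-1) vac = u
  jacobi : ∀ (u v w : V) (a b c : ℤ),
    (∑ᶠ β : ℕ, ((-1 : ℂ) ^ β * cchoose (-c-1) β) •
        Y u (-a-c-2-(β:ℤ)) (Y v ((β:ℤ)-b-1) w))
    - (∑ᶠ α : ℕ, ((-1 : ℂ) ^ c * (-1 : ℂ) ^ α * cchoose (-c-1) α) •
        Y v (-c-b-(α:ℤ)-2) (Y u ((α:ℤ)-a-1) w))
    = ∑ᶠ γ : ℕ, ((-1 : ℂ) ^ γ * cchoose (a+(γ:ℤ)) γ) •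
        Y (Y u ((γ:ℤ)-c-1) v) (-a-b-(γ:ℤ)-2) w

/-- A derivation of a vertex algebra: `[d, Y(v,x)] = Y(dv, x)`. -/
def VertexAlg.IsDerivation {V : Type*} [AddCommGroup V] [Module ℂ V]
    (U : VertexAlg V) (d : Module.End ℂ V) : Prop :=
  ∀ (v : V) (n : ℤ), d ∘ₗ U.Y v n - U.Y v n ∘ₗ d = U.Y (d v) n

inductive Reach {r : ℕ} {V : Type*} [AddCommGroup V] [Module ℂ V]
    (T : ToroidalVA r V) : V → Prop
  | vac : Reach T T.vac
  | step (u : V) (n : ℤ) (m : Fin r → ℤ) (w : V) : Reach T w → Reach T (T.Y u n m w)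

/-- The left ideal `V⁰` generated by the vacuum. -/
noncomputable def Vzero {r : ℕ} {V : Type*} [AddCommGroup V] [Module ℂ V]
    (T : ToroidalVA r V) : Submodule ℂ V :=
  Submodule.span ℂ {w | Reach T w}

section Aux10

open Module Function

lemma cchoose_zero (n : ℤ) : cchoose n 0 = 1 := by simp [cchoose]

lemma cchoose_one (n : ℤ) : cchoose n 1 = n := by simp [cchoose]

lemma cchoose_cast_sub_one (γ : ℕ) (hγ : 1 ≤ γ) : cchoose ((γ:ℤ)-1) γ = 0 := by
  have hmem : γ - 1 ∈ Finset.range γ := Finset.mem_range.mpr (by omega)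
  have h : ((((γ:ℤ)-1 : ℤ)) : ℂ) - ((γ-1 : ℕ) : ℂ) = 0 := by
    push_cast [Nat.cast_sub hγ]; ring
  rw [cchoose, Finset.prod_eq_zero hmem h, zero_div]

variable {r : ℕ} {V : Type*} [AddCommGroup V] [Module ℂ V]

lemma VertexAlg.deriv_apply (U : VertexAlg V) {d : Module.End ℂ V}
    (hd : U.IsDerivation d) (v : V) (n : ℤ) (w : V) :
    d (U.Y v n w) = U.Y (d v) n w + U.Y v n (d w) := by
  have h := LinearMap.congr_fun (hd v n) w
  simp only [LinearMap.sub_apply, LinearMap.comp_apply] at h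
  exact sub_eq_iff_eq_add.mp h

lemma VertexAlg.deriv_vac (U : VertexAlg V) {d : Module.End ℂ V}
    (hd : U.IsDerivation d) : d U.vac = 0 := by
  have h := U.deriv_apply hd U.vac (-1) U.vac
  rw [U.vacuum_prop, U.vacuum_prop, if_pos rfl, if_pos rfl] at h
  have h0 : U.Y (d U.vac) (-1) U.vac = 0 := (right_eq_add.mp h)
  rw [← U.creation1 (d U.vac), h0]

lemma VertexAlg.translate (U : VertexAlg V) (u : V) (n : ℤ) :
    U.Y (U.Y u (-2) U.vac) n = (-n : ℂ) • U.Y u (n-1) := by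
  ext w
  have h := U.jacobi u U.vac w (-n-2) 0 1
  have e1 : (∑ᶠ β : ℕ, ((-1 : ℂ) ^ β * cchoose (-1-1) β) •
        U.Y u (-(-n-2)-1-2-(β:ℤ)) (U.Y U.vac ((β:ℤ)-0-1) w)) = U.Y u (n-1) w := by
    rw [finsum_eq_single _ 0 ?_]
    · have hi : -(-n-2)-1-2-((0:ℕ):ℤ) = n - 1 := by push_cast; ring
      rw [hi, U.vacuum_prop, if_pos (by norm_num)]
      simp [cchoose_zero]
    · intro β hβ
      have hβ1 : 1 ≤ β := Nat.one_le_iff_ne_zero.mpr hβ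
      rw [U.vacuum_prop, if_neg (by omega)]
      simp
  have e2 : (∑ᶠ α : ℕ, ((-1 : ℂ) ^ (1:ℤ) * (-1 : ℂ) ^ α * cchoose (-1-1) α) •
        U.Y U.vac (-1-0-(α:ℤ)-2) (U.Y u ((α:ℤ)-(-n-2)-1) w)) = 0 := by
    apply finsum_eq_zero_of_forall_eq_zero
    intro α
    rw [U.vacuum_prop, if_neg (by omega)]
    simp
  have e3 : (∑ᶠ γ : ℕ, ((-1 : ℂ) ^ γ * cchoose ((-n-2)+(γ:ℤ)) γ) •
        U.Y (U.Y u ((γ:ℤ)-1-1) U.vac) (-(-n-2)-0-(γ:ℤ)-2) w)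
      = U.Y (U.Y u (-2) U.vac) n w + ((n:ℂ)+1) • U.Y u (n-1) w := by
    rw [finsum_eq_finset_sum_of_support_subset _ (s := ({0,1} : Finset ℕ)) ?_]
    · rw [Finset.sum_pair (by norm_num)]
      have i0 : ((0:ℕ):ℤ)-1-1 = -2 := by norm_num
      have o0 : -(-n-2)-0-((0:ℕ):ℤ)-2 = n := by push_cast; ring
      have i1 : ((1:ℕ):ℤ)-1-1 = -1 := by norm_num
      have o1 : -(-n-2)-0-((1:ℕ):ℤ)-2 = n-1 := by push_cast; ring
      have a1 : (-n-2)+((1:ℕ):ℤ) = -n-1 := by push_cast; ring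
      rw [i0, o0, i1, o1, a1, U.creation1, cchoose_zero, cchoose_one]
      have c0 : ((-1:ℂ)^(0:ℕ) * 1) = 1 := by norm_num
      have c1 : ((-1:ℂ)^(1:ℕ) * (((-n-1 : ℤ)):ℂ)) = (n:ℂ)+1 := by push_cast; ring
      rw [c0, c1, one_smul]
    · intro γ hγ
      rw [Function.mem_support] at hγ
      by_contra hc
      simp only [Finset.coe_insert, Set.mem_insert_iff, Finset.coe_singleton,
        Set.mem_singleton_iff, not_or] at hc
      obtain ⟨h0, h1⟩ := hc
      have h2 : (0:ℤ) ≤ (γ:ℤ)-1-1 := by omega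
      exact hγ (by rw [U.creation0 u ((γ:ℤ)-1-1) h2]; simp)
  rw [e1, e2, e3, sub_zero] at h
  rw [LinearMap.smul_apply]
  have hA : U.Y (U.Y u (-2) U.vac) n w
      = U.Y u (n-1) w - ((n:ℂ)+1) • U.Y u (n-1) w := eq_sub_of_add_eq h.symm
  rw [hA, show (-n:ℂ) = 1 - ((n:ℂ)+1) by ring, sub_smul, one_smul]

lemma VertexAlg.d0_bracket (U : VertexAlg V) (u w0 : V) (n : ℤ) :
    U.Y u n (U.Y w0 (-2) U.vac) + (-n : ℂ) • U.Y u (n-1) w0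
      = U.Y (U.Y u n w0) (-2) U.vac := by
  have h := U.jacobi u w0 U.vac (-1) 1 (-n-1)
  have e1 : (∑ᶠ β : ℕ, ((-1 : ℂ) ^ β * cchoose (-(-n-1)-1) β) •
        U.Y u (-(-1)-(-n-1)-2-(β:ℤ)) (U.Y w0 ((β:ℤ)-1-1) U.vac))
      = U.Y u n (U.Y w0 (-2) U.vac) + (-n : ℂ) • U.Y u (n-1) w0 := by
    rw [finsum_eq_finset_sum_of_support_subset _ (s := ({0,1} : Finset ℕ)) ?_]
    · rw [Finset.sum_pair (by norm_num)]
      have i0 : ((0:ℕ):ℤ)-1-1 = -2 := by norm_num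
      have o0 : -(-1)-(-n-1)-2-((0:ℕ):ℤ) = n := by push_cast; ring
      have i1 : ((1:ℕ):ℤ)-1-1 = -1 := by norm_num
      have o1 : -(-1)-(-n-1)-2-((1:ℕ):ℤ) = n-1 := by push_cast; ring
      have a0 : -(-n-1)-1 = n := by ring
      rw [i0, o0, i1, o1, a0, U.creation1, cchoose_zero, cchoose_one]
      have c0 : ((-1:ℂ)^(0:ℕ) * 1) = 1 := by norm_num
      have c1 : ((-1:ℂ)^(1:ℕ) * ((n : ℤ):ℂ)) = (-n:ℂ) := by push_cast; ring
      rw [c0, c1, one_smul]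
    · intro γ hγ
      rw [Function.mem_support] at hγ
      by_contra hc
      simp only [Finset.coe_insert, Set.mem_insert_iff, Finset.coe_singleton,
        Set.mem_singleton_iff, not_or] at hc
      obtain ⟨h0, h1⟩ := hc
      have h2 : (0:ℤ) ≤ (γ:ℤ)-1-1 := by omega
      exact hγ (by rw [U.creation0 w0 ((γ:ℤ)-1-1) h2]; simp)
  have e2 : (∑ᶠ α : ℕ, ((-1 : ℂ) ^ (-n-1:ℤ) * (-1 : ℂ) ^ α * cchoose (-(-n-1)-1) α) •
        U.Y w0 (-(-n-1)-1-(α:ℤ)-2) (U.Y u ((α:ℤ)-(-1)-1) U.vac)) = 0 := by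
    apply finsum_eq_zero_of_forall_eq_zero
    intro α
    have hi : (α:ℤ)-(-1)-1 = (α:ℤ) := by ring
    rw [hi, U.creation0 u (α:ℤ) (by positivity)]
    simp
  have e3 : (∑ᶠ γ : ℕ, ((-1 : ℂ) ^ γ * cchoose ((-1)+(γ:ℤ)) γ) •
        U.Y (U.Y u ((γ:ℤ)-(-n-1)-1) w0) (-(-1)-1-(γ:ℤ)-2) U.vac)
      = U.Y (U.Y u n w0) (-2) U.vac := by
    rw [finsum_eq_single _ 0 ?_]
    · have hi : ((0:ℕ):ℤ)-(-n-1)-1 = n := by push_cast; ring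
      have ho : -(-1)-1-((0:ℕ):ℤ)-2 = -2 := by norm_num
      have ha : (-1)+((0:ℕ):ℤ) = -1 := by norm_num
      rw [hi, ho, ha, cchoose_zero]
      norm_num
    · intro γ hγ
      have hγ1 : 1 ≤ γ := Nat.one_le_iff_ne_zero.mpr hγ
      have ha : (-1)+(γ:ℤ) = (γ:ℤ)-1 := by ring
      rw [ha, cchoose_cast_sub_one γ hγ1, mul_zero, zero_smul]
  rw [e1, e2, e3, sub_zero] at h
  exact h

/-- The simultaneous eigenspace. -/
noncomputable def Esp (D : Fin r → Module.End ℂ V) (m : Fin r → ℤ) : Submodule ℂ V :=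
  ⨅ i, Module.End.eigenspace (D i) ((m i : ℂ))

lemma mem_Esp {D : Fin r → Module.End ℂ V} {m : Fin r → ℤ} {u : V} :
    u ∈ Esp D m ↔ ∀ i, D i u = ((m i : ℂ)) • u := by
  simp [Esp, Submodule.mem_iInf, Module.End.mem_eigenspace_iff]

lemma eigen_ext {D : Fin r → Module.End ℂ V} (hsup : (⨆ m, Esp D m) = ⊤)
    {W : Type*} [AddCommGroup W] [Module ℂ W] {f g : V →ₗ[ℂ] W}
    (h : ∀ m, ∀ u ∈ Esp D m, f u = g u) : f = g := by
  ext u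
  have hu : u ∈ ⨆ m, Esp D m := hsup.symm ▸ Submodule.mem_top
  refine Submodule.iSup_induction (motive := fun x => f x = g x) _ hu h ?_ ?_
  · simp
  · intro x y hx hy; simp [map_add, hx, hy]

lemma eigen_Y (U : VertexAlg V) {D : Fin r → Module.End ℂ V}
    (hder : ∀ i, U.IsDerivation (D i)) {m1 m2 : Fin r → ℤ} {a b : V}
    (ha : a ∈ Esp D m1) (hb : b ∈ Esp D m2) (k : ℤ) :
    U.Y a k b ∈ Esp D (m1 + m2) := by
  rw [mem_Esp] at ha hb ⊢
  intro i
  rw [U.deriv_apply (hder i), ha i, hb i, map_smul]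
  simp only [Pi.smul_apply, LinearMap.smul_apply, map_smul]
  rw [← add_smul]
  congr 1
  push_cast [Pi.add_apply]
  ring

/-- The toroidal vertex operator built from an ordinary one and a family of
projections. -/
noncomputable def Ylin (U : VertexAlg V) (proj : (Fin r → ℤ) → Module.End ℂ V) :
    V →ₗ[ℂ] (ℤ → (Fin r → ℤ) → Module.End ℂ V) where
  toFun u := fun n m => U.Y (proj (-m) u) n
  map_add' x y := by funext n m; simp [map_add]
  map_smul' c x := by funext n m; simp [map_smul]

lemma Ylin_apply (U : VertexAlg V) (proj : (Fin r → ℤ) → Module.End ℂ V)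
    (u : V) (n : ℤ) (m : Fin r → ℤ) :
    Ylin U proj u n m = U.Y (proj (-m) u) n := rfl

end Aux10

/-- Let `U` be an ordinary vertex algebra with pairwise commuting derivations
`D_1,…,D_r` acting semisimply with integer eigenvalues (i.e. `U` is spanned by
simultaneous integer eigenvectors).  Setting `Y(u;x0,x) = Y(x^D u, x0)`, `U`
becomes an extended `(r+1)`-toroidal vertex algebra with the same vacuum, with
`D_0` the canonical derivation `u ↦ u_{-2}1` of `U`, with `D_j = D j`, with
`Y(u;x0,x) = x^m Y(u,x0)` on an eigenvector `u` of eigenvalues `m` (i.e. the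
`(n,m')`-component is `Y u n` if `m' = -m` and `0` otherwise), and `U⁰ = U`. -/
theorem stmt10 {r : ℕ} {V : Type*} [AddCommGroup V] [Module ℂ V]
    (U : VertexAlg V) (D : Fin r → Module.End ℂ V)
    (hder : ∀ i, U.IsDerivation (D i))
    (hcomm : ∀ i j, Commute (D i) (D j))
    (hss : Submodule.span ℂ
      {u : V | ∃ mv : Fin r → ℤ, ∀ i, D i u = ((mv i : ℂ)) • u} = ⊤) :
    ∃ T : ExtToroidalVA r V,
      T.toToroidalVA.vac = U.vac ∧
      (∀ u : V, T.D0 u = U.Y u (-2) U.vac) ∧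
      (∀ i, T.Dj i = D i) ∧
      (∀ (u : V) (mv : Fin r → ℤ), (∀ i, D i u = ((mv i : ℂ)) • u) →
        ∀ (n : ℤ) (m' : Fin r → ℤ),
          T.toToroidalVA.Y u n m' = if m' = -mv then U.Y u n else 0) ∧
      Vzero T.toToroidalVA = ⊤ := by
  classical
  -- eigenspaces are independent and span
  have hEspLe : ∀ m : Fin r → ℤ, Esp D m ≤ ⨅ i, (D i).maxGenEigenspace ((m i : ℂ)) := by
    intro m x hx
    rw [Submodule.mem_iInf]
    intro i
    have hxi : D i x = ((m i : ℂ)) • x := mem_Esp.mp hx i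
    rw [Module.End.mem_maxGenEigenspace]
    exact ⟨1, by simp [pow_one, LinearMap.sub_apply, hxi]⟩
  have hindep : iSupIndep (Esp D) := by
    have big := Module.End.independent_iInf_maxGenEigenspace_of_forall_mapsTo D
      (fun i j φ => Module.End.mapsTo_maxGenEigenspace_of_comm (hcomm j i) φ)
    have hinj : Function.Injective (fun m : Fin r → ℤ => fun i => ((m i : ℂ))) := by
      intro a b hab
      funext i
      exact_mod_cast show ((a i : ℂ)) = (b i : ℂ) from congrFun hab i
    exact iSupIndep.mono (big.comp hinj) (fun m => hEspLe m)
  have hsup : (⨆ m, Esp D m) = ⊤ := by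
    rw [← top_le_iff, ← hss, Submodule.span_le]
    rintro u ⟨mv, hu⟩
    exact Submodule.mem_iSup_of_mem mv (mem_Esp.mpr hu)
  have hint : DirectSum.IsInternal (Esp D) :=
    DirectSum.isInternal_submodule_of_iSupIndep_of_iSup_eq_top hindep hsup
  -- the projections onto the eigenspaces
  set proj : (Fin r → ℤ) → Module.End ℂ V := fun m =>
    { toFun := fun u =>
        (((LinearEquiv.ofBijective (DirectSum.coeLinearMap (Esp D)) hint).symm u) m : V)
      map_add' := fun x y => by simp
      map_smul' := fun c x => by simp [DirectSum.smul_apply] } with hproj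
  have hprojapp : ∀ (m : Fin r → ℤ) (u : V), proj m u =
      (((LinearEquiv.ofBijective (DirectSum.coeLinearMap (Esp D)) hint).symm u) m : V) := by
    intro m u; rw [hproj]; rfl
  have hprojmem : ∀ m u, proj m u ∈ Esp D m := by
    intro m u
    rw [hprojapp]
    exact SetLike.coe_mem _
  have hprojeq : ∀ (m : Fin r → ℤ) (u : V), u ∈ Esp D m →
      ∀ m', proj m' u = if m' = m then u else 0 := by
    intro m u hu m'
    by_cases hmm : m' = m
    · subst hmm
      rw [hprojapp, hint.ofBijective_coeLinearMap_of_mem hu, if_pos rfl]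
    · rw [hprojapp, hint.ofBijective_coeLinearMap_of_mem_ne (Ne.symm hmm) hu, if_neg hmm]
      rfl
  have hprojD : ∀ (f : Module.End ℂ V),
      (∀ m x, x ∈ Esp D m → f x ∈ Esp D m) →
      ∀ (m : Fin r → ℤ) (u : V), proj m (f u) = f (proj m u) := by
    intro f hf m
    have : proj m ∘ₗ f = f ∘ₗ proj m := by
      refine eigen_ext hsup ?_
      intro m' x hx
      rw [LinearMap.comp_apply, LinearMap.comp_apply, hprojeq m' (f x) (hf m' x hx) m,
          hprojeq m' x hx m]
      by_cases hmm : m = m' <;> simp [hmm]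
    intro u
    exact LinearMap.congr_fun this u
  have hDpres : ∀ i m x, x ∈ Esp D m → D i x ∈ Esp D m := by
    intro i m x hx
    rw [mem_Esp] at hx ⊢
    intro j
    have hji := DFunLike.congr_fun (hcomm j i) x
    simp only [Module.End.mul_apply] at hji
    rw [hji, hx j, map_smul]
  -- the canonical derivation D0
  set T0 : Module.End ℂ V :=
    { toFun := fun x => U.Y x (-2) U.vac
      map_add' := fun x y => by simp [map_add]
      map_smul' := fun c x => by simp [map_smul] } with hT0
  have hT0app : ∀ x : V, T0 x = U.Y x (-2) U.vac := fun x => rfl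
  have hT0pres : ∀ m x, x ∈ Esp D m → T0 x ∈ Esp D m := by
    intro m x hx
    rw [mem_Esp] at hx ⊢
    intro i
    rw [hT0app, U.deriv_apply (hder i), U.deriv_vac (hder i), map_zero, add_zero, hx i]
    simp [map_smul, hT0app]
  have hvacE : U.vac ∈ Esp D 0 := mem_Esp.mpr (fun i => by
    rw [U.deriv_vac (hder i)]; simp)
  -- component-wise translation and bracket facts
  have htransl : ∀ (a : V) (n : ℤ), U.Y (T0 a) n = (-n : ℂ) • U.Y a (n-1) := by
    intro a n
    rw [hT0app]
    exact U.translate a n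
  have hbr : ∀ (a w : V) (n : ℤ),
      T0 (U.Y a n w) - U.Y a n (T0 w) = U.Y (T0 a) n w := by
    intro a w n
    rw [hT0app, hT0app, htransl a n, ← U.d0_bracket a w n, LinearMap.smul_apply]
    abel
  -- assemble the structure
  refine ⟨{ Y := Ylin U proj
            vac := U.vac
            trunc := ?_
            vacuum_prop := ?_
            creation := ?_
            jacobi := ?_
            D0 := T0
            Dj := D
            D0_vac := ?_
            Dj_vac := fun i => U.deriv_vac (hder i)
            D0_comm := ?_
            D0_deriv := ?_
            Dj_comm := ?_
            Dj_deriv := ?_ }, rfl, fun u => rfl, fun i => rfl, ?_, ?_⟩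
  -- trunc
  · intro u v
    choose NN hNN using fun m => U.trunc (proj m u) v
    have hsupp : (Function.support fun m => proj m u).Finite := by
      apply Set.Finite.subset
        (DFinsupp.finite_support
          ((LinearEquiv.ofBijective (DirectSum.coeLinearMap (Esp D)) hint).symm u))
      intro m hm
      rw [Function.mem_support] at hm
      simp only [Set.mem_setOf_eq]
      intro hz
      exact hm (by rw [hprojapp, hz]; rfl)
    obtain ⟨N, hN⟩ := (hsupp.toFinset.image NN).exists_le
    refine ⟨N, fun n hn m => ?_⟩
    rw [Ylin_apply]
    by_cases h0 : proj (-m) u = 0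
    · rw [h0]; simp
    · exact hNN (-m) n
        (le_trans (hN _ (Finset.mem_image_of_mem NN (hsupp.mem_toFinset.mpr h0))) hn)
  -- vacuum_prop
  · intro n m v
    rw [Ylin_apply, hprojeq 0 U.vac hvacE (-m)]
    by_cases hm : m = 0
    · subst hm
      rw [if_pos (by simp), U.vacuum_prop]
      by_cases hn : n = -1
      · rw [if_pos hn, if_pos ⟨hn, rfl⟩]
      · rw [if_neg hn, if_neg (by tauto)]
    · rw [if_neg (by simpa [neg_eq_zero] using hm)]
      rw [if_neg (by tauto)]
      simp
  -- creation
  · intro u n m hn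
    rw [Ylin_apply]
    exact U.creation0 _ n hn
  -- jacobi
  · intro u v w a b c p q
    have hYa : ∀ k : ℤ, proj q ∘ₗ U.Y (proj p u) k = U.Y (proj p u) k ∘ₗ proj (q - p) := by
      intro k
      refine eigen_ext hsup ?_
      intro m' x hx
      rw [LinearMap.comp_apply, LinearMap.comp_apply, hprojeq m' x hx (q - p)]
      have hmem := eigen_Y U hder (hprojmem p u) hx k
      rw [hprojeq (p + m') _ hmem q]
      by_cases hqq : q = p + m'
      · rw [if_pos hqq, if_pos (by rw [hqq]; abel)]
      · rw [if_neg hqq, if_neg (fun hc => hqq (by rw [← hc]; abel)), map_zero]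
    have hre : ∀ γ : ℕ, proj q (U.Y (proj p u) ((γ:ℤ)-c-1) v)
        = U.Y (proj p u) ((γ:ℤ)-c-1) (proj (q - p) v) :=
      fun γ => LinearMap.congr_fun (hYa ((γ:ℤ)-c-1)) v
    simp only [Ylin_apply, neg_neg, neg_sub, hre]
    exact U.jacobi (proj p u) (proj (q - p) v) w a b c
  -- D0_vac
  · rw [hT0app, U.vacuum_prop, if_neg (by norm_num)]
  -- D0_comm
  · intro u n m
    ext w
    simp only [LinearMap.sub_apply, LinearMap.comp_apply, Ylin_apply,
      hprojD T0 hT0pres (-m) u]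
    exact hbr (proj (-m) u) w n
  -- D0_deriv
  · intro u n m
    simp only [Ylin_apply]
    rw [hprojD T0 hT0pres (-m) u, htransl (proj (-m) u) n]
  -- Dj_comm
  · intro i u n m
    ext w
    simp only [LinearMap.sub_apply, LinearMap.comp_apply, Ylin_apply,
      hprojD (D i) (hDpres i) (-m) u]
    have h := LinearMap.congr_fun (hder i (proj (-m) u) n) w
    simpa only [LinearMap.sub_apply, LinearMap.comp_apply] using h
  -- Dj_deriv
  · intro i u n m
    rw [Ylin_apply, Ylin_apply, hprojD (D i) (hDpres i) (-m) u,
      mem_Esp.mp (hprojmem (-m) u) i]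
    have : (((-m) i : ℤ) : ℂ) = (-(m i) : ℂ) := by push_cast [Pi.neg_apply]; ring
    rw [this, map_smul]
    rfl
  -- characterization
  · intro u mv hu n m'
    have huE : u ∈ Esp D mv := mem_Esp.mpr hu
    show Ylin U proj u n m' = _
    rw [Ylin_apply, hprojeq mv u huE (-m')]
    by_cases hm : m' = -mv
    · rw [if_pos (by rw [hm]; simp), if_pos hm]
    · rw [if_neg (fun hc => hm (by rw [← hc]; simp)), if_neg hm, map_zero]
      rfl
  -- Vzero = ⊤
  · rw [Vzero, ← top_le_iff, ← hss, Submodule.span_le]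
    rintro u ⟨mv, hu⟩
    have huE : u ∈ Esp D mv := mem_Esp.mpr hu
    have h1 : Ylin U proj u (-1) (-mv) U.vac = u := by
      rw [Ylin_apply, neg_neg, hprojeq mv u huE mv, if_pos rfl, U.creation1]
    refine Submodule.subset_span ?_
    show Reach _ u
    rw [← h1]
    exact Reach.step u (-1) (-mv) _ Reach.vac
end

section
/- Let V be a closed local subspace of E(W,r), and let a, b, c_0, …, c_k ∈ V and m ∈ ℤ^r satisfy the commutator relation [a(x0,m), b(y0,y)] = y^m Σ_{j=0}^k c_j(y0,y) (1/j!)(∂/∂y0)^j x0^{-1}δ(y0/x0), where a(x0,x) = Σ_{m∈ℤ^r} a(x0,m) x^{−m}. Then a(x0,x)_{j,m} b(x0,x) = c_j(x0,x) for 0 ≤ j ≤ k, and a(x0,x)_{j,m} b(x0,x) = 0 for j > k. -/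
/-- Membership in `E(W,r)`: on each vector the `x0`-powers are bounded below
(only finitely many negative powers of `x0`). -/
def ETrunc {r : ℕ} {W : Type*} [AddCommGroup W] (A : ECoeff r W) : Prop :=
  ∀ w : W, ∃ N : ℤ, ∀ n : ℤ, N ≤ n → ∀ m : Fin r → ℤ, A n m w = 0

/-- Mutual locality with witness `k`:
`(x0-y0)^k a(x0,x) b(y0,y) = (x0-y0)^k b(y0,y) a(x0,x)`, stated coefficientwise:
both sides are the coefficients of `x0^P y0^Q x^M y^N`, applied to `w`. -/
def LocalTo {r : ℕ} {W : Type*} [AddCommGroup W] [Module ℂ W]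
    (k : ℕ) (A B : ECoeff r W) : Prop :=
  ∀ (w : W) (P Q : ℤ) (M N : Fin r → ℤ),
    ∑ t ∈ Finset.range (k+1), ((-1:ℂ)^t * (k.choose t : ℂ)) •
      A ((k:ℤ)-t-P-1) (-M) (B ((t:ℤ)-Q-1) (-N) w)
    = ∑ t ∈ Finset.range (k+1), ((-1:ℂ)^t * (k.choose t : ℂ)) •
      B ((t:ℤ)-Q-1) (-N) (A ((k:ℤ)-t-P-1) (-M) w)

/-- The component `a(y0,y)_{m0,m} b(y0,y)` of `Y_E(a(y0,y); z0,z) b(y0,y)`,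
given (for mutually local `a, b`) by the residue formula
`a_{m0,m}b = Res_{x0} Res_x x^{m-1} y^{-m}
  [ (x0-y0)^{m0} a(x0,x)b(y0,y) - (-y0+x0)^{m0} b(y0,y)a(x0,x) ]`,
stated coefficientwise: `prodCoeff A B m0 m n q w` is the coefficient of
`y0^{-n-1} y^{-q}` applied to `w`.  Here `(x0-y0)^{m0}` is expanded in
nonnegative powers of `y0` and `(-y0+x0)^{m0}` in nonnegative powers of `x0`. -/
noncomputable def prodCoeff {r : ℕ} {W : Type*} [AddCommGroup W] [Module ℂ W]
    (A B : ECoeff r W) (m0 : ℤ) (m : Fin r → ℤ) : ECoeff r W :=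
  fun n q w =>
    (∑ᶠ t : ℕ, ((-1:ℂ)^t * cchoose m0 t) • A (m0 - t) m (B (n + t) (q - m) w))
    - ∑ᶠ s : ℕ, ((-1:ℂ)^(m0 - (s:ℤ)) * cchoose m0 s) • B (m0 - s + n) (q - m) (A s m w)

lemma cchoose_natCast (n t : ℕ) : cchoose (n : ℤ) t = (n.choose t : ℂ) := by
  induction t with
  | zero => simp [cchoose]
  | succ t ih =>
    have ht1 : ((t : ℂ) + 1) ≠ 0 := Nat.cast_add_one_ne_zero t
    have hfac : (t.factorial : ℂ) ≠ 0 := Nat.cast_ne_zero.2 (Nat.factorial_pos t).ne'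
    have hprod : (∏ i ∈ Finset.range t, (((n : ℤ) : ℂ) - (i : ℂ)))
        = (n.choose t : ℂ) * (t.factorial : ℂ) := by
      have h := ih
      rw [cchoose, div_eq_iff hfac] at h
      exact h
    have key : (n.choose (t+1) : ℂ) * ((t:ℂ)+1) = (n.choose t : ℂ) * ((n:ℂ) - t) := by
      rcases Nat.lt_or_ge n t with h | h
      · simp [Nat.choose_eq_zero_of_lt h, Nat.choose_eq_zero_of_lt (Nat.lt_succ_of_lt h)]
      · have h0 := Nat.choose_succ_right_eq n t
        have h1 : ((n.choose (t+1) * (t+1) : ℕ) : ℂ) = ((n.choose t * (n - t) : ℕ) : ℂ) := by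
          exact_mod_cast congrArg (fun x : ℕ => (x : ℂ)) h0
        push_cast [Nat.cast_sub h] at h1
        linear_combination h1
    rw [cchoose, Finset.prod_range_succ, hprod, Nat.factorial_succ]
    rw [div_eq_iff (by push_cast; exact mul_ne_zero ht1 hfac :
      ((((t+1) * t.factorial : ℕ)) : ℂ) ≠ 0)]
    push_cast
    linear_combination (-(t.factorial : ℂ)) * key

lemma choose_swap (j t i : ℕ) (ht : t ≤ j) :
    j.choose t * (j - t).choose i = j.choose i * (j - i).choose t := by
  rcases le_or_gt (t + i) j with h | h
  · have h1 := Nat.choose_mul (n := j) (Nat.le_add_right t i)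
    have h2 := Nat.choose_mul (n := j) (Nat.le_add_left i t)
    simp only [Nat.add_sub_cancel_left, Nat.add_sub_cancel] at h1 h2
    calc j.choose t * (j - t).choose i = j.choose (t+i) * (t+i).choose t := h1.symm
      _ = j.choose (t+i) * (t+i).choose i := by rw [Nat.choose_symm_add]
      _ = j.choose i * (j - i).choose t := h2
  · have hL : (j - t).choose i = 0 := Nat.choose_eq_zero_of_lt (by omega)
    rcases le_or_gt i j with hi | hi
    · have hR : (j - i).choose t = 0 := Nat.choose_eq_zero_of_lt (by omega)
      simp [hL, hR]
    · simp [hL, Nat.choose_eq_zero_of_lt hi]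

lemma alt_sum (j i : ℕ) :
    ∑ t ∈ Finset.range (j+1), (-1:ℂ)^t * (j.choose t : ℂ) * ((j - t).choose i : ℂ)
      = if i = j then 1 else 0 := by
  have hswap : ∀ t ∈ Finset.range (j+1), (-1:ℂ)^t * (j.choose t : ℂ) * ((j - t).choose i : ℂ)
      = (j.choose i : ℂ) * ((-1:ℂ)^t * ((j - i).choose t : ℂ)) := by
    intro t htm
    have ht : t ≤ j := Nat.lt_succ_iff.1 (Finset.mem_range.1 htm)
    have hc : (j.choose t : ℂ) * ((j - t).choose i : ℂ)
        = (j.choose i : ℂ) * ((j - i).choose t : ℂ) := by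
      exact_mod_cast congrArg (fun x : ℕ => (x : ℂ)) (choose_swap j t i ht)
    calc (-1:ℂ)^t * (j.choose t : ℂ) * ((j - t).choose i : ℂ)
        = (-1:ℂ)^t * ((j.choose t : ℂ) * ((j - t).choose i : ℂ)) := by ring
      _ = (-1:ℂ)^t * ((j.choose i : ℂ) * ((j - i).choose t : ℂ)) := by rw [hc]
      _ = (j.choose i : ℂ) * ((-1:ℂ)^t * ((j - i).choose t : ℂ)) := by ring
  rw [Finset.sum_congr rfl hswap, ← Finset.mul_sum]
  rcases le_or_gt i j with hi | hi
  · have hsub : Finset.range (j - i + 1) ⊆ Finset.range (j + 1) :=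
      Finset.range_subset_range.2 (by omega)
    have hz : ∀ t ∈ Finset.range (j+1), t ∉ Finset.range (j - i + 1) →
        (-1:ℂ)^t * ((j - i).choose t : ℂ) = 0 := by
      intro t _ htn
      have : j - i < t := by simpa [Nat.lt_succ_iff] using htn
      simp [Nat.choose_eq_zero_of_lt this]
    rw [← Finset.sum_subset hsub hz]
    have hint : ((∑ t ∈ Finset.range (j - i + 1), (-1:ℤ)^t * ((j-i).choose t : ℤ) : ℤ) : ℂ)
        = ∑ t ∈ Finset.range (j - i + 1), (-1:ℂ)^t * ((j - i).choose t : ℂ) := by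
      push_cast; ring
    rw [← hint, Int.alternating_sum_range_choose]
    by_cases hij : i = j
    · simp [hij]
    · have h0 : j - i ≠ 0 := by omega
      simp [h0, hij]
  · simp [Nat.choose_eq_zero_of_lt hi, if_neg (by omega : ¬ i = j)]

/-- Let `V` be a closed local subspace of `E(W,r)` and `a, b, c_0, …, c_k ∈ V`,
`m ∈ ℤ^r`, satisfying the commutator relation
`[a(x0,m), b(y0,y)] = y^m Σ_{j=0}^k c_j(y0,y) (1/j!)(∂/∂y0)^j x0⁻¹δ(y0/x0)`,
stated coefficientwise at `x0^α y0^β y^δ` applied to `w` (here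
`a(x0,m) = Σ_i a_{i,m} x0^{-i-1}` and
`(1/j!)(∂/∂y0)^j x0⁻¹δ(y0/x0) = Σ_{n∈ℤ} C(n,j) y0^{n-j} x0^{-n-1}`).
Then `a_{j,m}b = c_j` for `0 ≤ j ≤ k` and `a_{j,m}b = 0` for `j > k`. -/
theorem stmt15 {r : ℕ} {W : Type*} [AddCommGroup W] [Module ℂ W]
    (V : Submodule ℂ (ECoeff r W))
    (hlin : ∀ a ∈ V, ∀ (n : ℤ) (m : Fin r → ℤ), IsLinearMap ℂ (a n m))
    (htr : ∀ a ∈ V, ETrunc a)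
    (hloc : ∀ a ∈ V, ∀ b ∈ V, ∃ k, LocalTo k a b)
    (hclosed : ∀ a ∈ V, ∀ b ∈ V, ∀ (m0 : ℤ) (mm : Fin r → ℤ),
      prodCoeff a b m0 mm ∈ V)
    (a b : ECoeff r W) (ha : a ∈ V) (hb : b ∈ V)
    (k : ℕ) (c : ℕ → ECoeff r W) (hc : ∀ j ≤ k, c j ∈ V)
    (m : Fin r → ℤ)
    (hcomm : ∀ (α β : ℤ) (δ : Fin r → ℤ) (w : W),
      a (-α-1) m (b (-β-1) (-δ) w) - b (-β-1) (-δ) (a (-α-1) m w)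
      = ∑ j ∈ Finset.range (k+1),
          cchoose (-α-1) j • c j (-α-β-(j:ℤ)-2) (m - δ) w) :
    (∀ j : ℕ, j ≤ k → ∀ (n : ℤ) (q : Fin r → ℤ) (w : W),
      prodCoeff a b (j : ℤ) m n q w = c j n q w) ∧
    (∀ j : ℕ, k < j → ∀ (n : ℤ) (q : Fin r → ℤ) (w : W),
      prodCoeff a b (j : ℤ) m n q w = 0) := by
  have key : ∀ (j : ℕ) (n : ℤ) (q : Fin r → ℤ) (w : W),
      prodCoeff a b (j : ℤ) m n q w
        = ∑ i ∈ Finset.range (k+1),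
            (if i = j then (1:ℂ) else 0) • c i ((j:ℤ) + n + 2 - i - 2) q w := by
    intro j n q w
    have hcz : ∀ t : ℕ, j < t → cchoose (j : ℤ) t = 0 := by
      intro t ht
      rw [cchoose_natCast, Nat.choose_eq_zero_of_lt ht, Nat.cast_zero]
    have h1 : (∑ᶠ t : ℕ, ((-1:ℂ)^t * cchoose (j:ℤ) t) •
          a ((j:ℤ) - t) m (b (n + t) (q - m) w))
        = ∑ t ∈ Finset.range (j+1), ((-1:ℂ)^t * cchoose (j:ℤ) t) •
          a ((j:ℤ) - t) m (b (n + t) (q - m) w) := by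
      apply finsum_eq_sum_of_support_subset
      intro t ht
      simp only [Function.mem_support] at ht
      simp only [Finset.coe_range, Set.mem_Iio]
      by_contra hc2
      push_neg at hc2
      exact ht (by rw [hcz t (by omega), mul_zero, zero_smul])
    have h2 : (∑ᶠ s : ℕ, ((-1:ℂ)^((j:ℤ) - (s:ℤ)) * cchoose (j:ℤ) s) •
          b ((j:ℤ) - s + n) (q - m) (a s m w))
        = ∑ s ∈ Finset.range (j+1), ((-1:ℂ)^((j:ℤ) - (s:ℤ)) * cchoose (j:ℤ) s) •
          b ((j:ℤ) - s + n) (q - m) (a s m w) := by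
      apply finsum_eq_sum_of_support_subset
      intro s hs
      simp only [Function.mem_support] at hs
      simp only [Finset.coe_range, Set.mem_Iio]
      by_contra hc2
      push_neg at hc2
      exact hs (by rw [hcz s (by omega), mul_zero, zero_smul])
    simp only [prodCoeff]
    rw [h1, h2,
      ← Finset.sum_range_reflect (fun s => ((-1:ℂ)^((j:ℤ) - (s:ℤ)) * cchoose (j:ℤ) s) •
          b ((j:ℤ) - s + n) (q - m) (a s m w)) (j+1)]
    simp only [Nat.add_sub_cancel]
    rw [← Finset.sum_sub_distrib]
    have hterm : ∀ t ∈ Finset.range (j+1),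
        (((-1:ℂ)^t * cchoose (j:ℤ) t) • a ((j:ℤ) - t) m (b (n + t) (q - m) w)
          - ((-1:ℂ)^((j:ℤ) - ((j - t : ℕ):ℤ)) * cchoose (j:ℤ) (j - t)) •
              b ((j:ℤ) - ((j - t : ℕ):ℤ) + n) (q - m) (a ((j - t : ℕ):ℤ) m w))
        = ∑ i ∈ Finset.range (k+1),
            ((-1:ℂ)^t * (j.choose t : ℂ) * ((j - t).choose i : ℂ)) •
              c i ((j:ℤ) + n + 2 - i - 2) q w := by
      intro t htm
      have ht : t ≤ j := Nat.lt_succ_iff.1 (Finset.mem_range.1 htm)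
      have hcm := hcomm ((t:ℤ) - j - 1) (-n - (t:ℤ) - 1) (m - q) w
      have f1 : -((t:ℤ) - j - 1) - 1 = (j:ℤ) - t := by ring
      have f2 : -(-n - (t:ℤ) - 1) - 1 = n + t := by ring
      have f3 : -(m - q) = q - m := neg_sub m q
      have f4 : m - (m - q) = q := sub_sub_cancel m q
      rw [f1, f2, f3, f4] at hcm
      have f5 : ∀ i : ℕ, -((t:ℤ) - j - 1) - (-n - (t:ℤ) - 1) - (i:ℤ) - 2
          = (j:ℤ) + n + 2 - i - 2 := fun i => by ring
      simp only [f5] at hcm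
      have f6 : ∀ i : ℕ, cchoose ((j:ℤ) - (t:ℤ)) i = (((j - t).choose i : ℕ) : ℂ) := by
        intro i
        rw [← Nat.cast_sub ht, cchoose_natCast]
      simp only [f6] at hcm
      have g1 : cchoose (j:ℤ) t = (j.choose t : ℂ) := cchoose_natCast j t
      have g2 : cchoose (j:ℤ) (j - t) = (j.choose t : ℂ) := by
        rw [cchoose_natCast, Nat.choose_symm ht]
      have g3 : ((j - t : ℕ) : ℤ) = (j:ℤ) - t := Nat.cast_sub ht
      have g4 : (-1:ℂ)^((j:ℤ) - ((j:ℤ) - (t:ℤ))) = (-1:ℂ)^t := by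
        rw [show (j:ℤ) - ((j:ℤ) - (t:ℤ)) = ((t:ℕ):ℤ) by ring, zpow_natCast]
      have g5 : (j:ℤ) - ((j:ℤ) - (t:ℤ)) + n = n + t := by ring
      rw [g1, g2, g3, g4, g5, ← smul_sub, hcm, Finset.smul_sum]
      apply Finset.sum_congr rfl
      intro i _
      rw [smul_smul]
    rw [Finset.sum_congr rfl hterm, Finset.sum_comm]
    apply Finset.sum_congr rfl
    intro i _
    rw [← Finset.sum_smul, alt_sum]
  constructor
  · intro j hj n q w
    rw [key j n q w]
    have hji : j ∈ Finset.range (k+1) := Finset.mem_range.2 (by omega)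
    rw [Finset.sum_eq_single j
      (fun i _ hij => by rw [if_neg hij, zero_smul])
      (fun h => absurd hji h)]
    rw [if_pos rfl, one_smul, show (j:ℤ) + n + 2 - j - 2 = n by ring]
  · intro j hj n q w
    rw [key j n q w]
    apply Finset.sum_eq_zero
    intro i hi
    have hij : i ≠ j := by
      have := Finset.mem_range.1 hi
      omega
    rw [if_neg hij, zero_smul]
end

section
/- Let g be a Lie algebra with symmetric invariant bilinear form ⟨·,·⟩ and let ℓ ∈ ℂ. Then the vector space g ⊕ ℂ carries a module structure over the Lie algebra L̂_+ ⊕ ℂk, where L̂_+ = g ⊗ ℂ[t0, t1^{±1},…,tr^{±1}], uniquely determined by: k acts as ℓ, (a⊗t0^j t^m)·1 = 0 for all j ≥ 0, and (a⊗t0^j t^m)·b = [a,b] if j = 0, = ⟨a,b⟩ℓ if j = 1, and = 0 if j ≥ 2, for a, b ∈ g, m ∈ ℤ^r. Moreover this module is ℕ-graded with ℂ in degree 0 and g in degree 1. -/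
/-- The underlying space of the `(r+1)`-toroidal Lie algebra
`L̂ = (g ⊗ ℂ[t0^{±1}, t1^{±1}, …, tr^{±1}]) ⊕ ℂk`: a Laurent polynomial with
coefficients in `g` is a finitely supported function `(Fin (r+1) → ℤ) →₀ g`
(recording the coefficient of `t0^{μ 0} t1^{μ 1} ⋯ tr^{μ r}`), and the second
factor records the coefficient of the central element `k`. -/
abbrev TorL (r : ℕ) (g : Type*) [AddCommGroup g] := ((Fin (r+1) → ℤ) →₀ g) × ℂ

/-- The bracket of the `(r+1)`-toroidal Lie algebra:
`[a⊗t0^{m0}t^m, b⊗t0^{n0}t^n]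
  = [a,b]⊗t0^{m0+n0}t^{m+n} + m0 ⟨a,b⟩ δ_{m0+n0,0} δ_{m+n,0} k`,
with `k` central. -/
noncomputable def torBracket (r : ℕ) (g : Type*) [LieRing g] [LieAlgebra ℂ g]
    (B : g →ₗ[ℂ] g →ₗ[ℂ] ℂ) : TorL r g → TorL r g → TorL r g :=
  fun x y =>
    ( x.1.sum fun μ a => y.1.sum fun ν b => Finsupp.single (μ + ν) ⁅a, b⁆,
      x.1.sum fun μ a => y.1.sum fun ν b =>
        if μ + ν = 0 then ((μ 0 : ℂ)) * B a b else 0 )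

/-- The action of `L̂_+ ⊕ ℂk` (elements of `L̂` supported on nonnegative powers
of `t0`) on `g ⊕ ℂ`, with `k` acting as the scalar `ℓ`:
`(a⊗t0^j t^m)·b = [a,b]` if `j = 0`, `⟨a,b⟩ℓ` if `j = 1`, `0` if `j ≥ 2`, and
`(a⊗t0^j t^m)·1 = 0`. -/
noncomputable def torAct (r : ℕ) (g : Type*) [LieRing g] [LieAlgebra ℂ g]
    (B : g →ₗ[ℂ] g →ₗ[ℂ] ℂ) (ℓ : ℂ) : TorL r g → g × ℂ → g × ℂ :=
  fun X v =>
    ( (X.1.sum fun μ a => if μ 0 = 0 then ⁅a, v.1⁆ else 0) + (X.2 * ℓ) • v.1,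
      (X.1.sum fun μ a => if μ 0 = 1 then ℓ * B a v.1 else 0) + X.2 * ℓ * v.2 )

/-- Membership in the subalgebra `L̂_+ ⊕ ℂk`: support on nonnegative `t0`-powers. -/
def TorPos {r : ℕ} {g : Type*} [AddCommGroup g] (X : TorL r g) : Prop :=
  ∀ μ ∈ X.1.support, 0 ≤ μ 0

section Aux
variable {r : ℕ} {g : Type*} [LieRing g] [LieAlgebra ℂ g]
  (B : g →ₗ[ℂ] g →ₗ[ℂ] ℂ) (ℓ : ℂ)

lemma act_single (μ : Fin (r+1) → ℤ) (a b : g) (c2 : ℂ) :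
    torAct r g B ℓ (Finsupp.single μ a, 0) (b, c2)
      = (if μ 0 = 0 then ⁅a, b⁆ else 0, if μ 0 = 1 then ℓ * B a b else 0) := by
  simp only [torAct]
  rw [Finsupp.sum_single_index (by simp), Finsupp.sum_single_index (by simp)]
  simp

lemma act_central (s : ℂ) (v : g × ℂ) :
    torAct r g B ℓ ((0 : (Fin (r+1) → ℤ) →₀ g), s) v = (s * ℓ) • v := by
  simp [torAct, Finsupp.sum_zero_index, Prod.smul_def, smul_eq_mul, mul_assoc]

lemma act_zero (v : g × ℂ) : torAct r g B ℓ 0 v = 0 := by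
  exact (by simpa using act_central (r:=r) B ℓ 0 v : torAct r g B ℓ (0, 0) v = 0)

lemma sum_eq {M : Type*} [AddCommMonoid M] (f : (Fin (r+1) → ℤ) →₀ g)
    (h h' : (Fin (r+1) → ℤ) → g → M) (H : ∀ μ a, h μ a = h' μ a) :
    f.sum h = f.sum h' := Finsupp.sum_congr fun μ _ => H μ (f μ)

lemma act_linear_v (X : TorL r g) : IsLinearMap ℂ (torAct r g B ℓ X) := by
  obtain ⟨f, s⟩ := X
  constructor
  · intro v w
    simp only [torAct, Prod.fst_add, Prod.snd_add, Prod.mk_add_mk, Prod.mk.injEq]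
    rw [sum_eq f _ (fun μ a => (if μ 0 = 0 then ⁅a, v.1⁆ else 0) + (if μ 0 = 0 then ⁅a, w.1⁆ else 0))
          (by intro μ a; split_ifs <;> simp),
        sum_eq f (fun μ a => if μ 0 = 1 then ℓ * B a (v.1 + w.1) else 0)
          (fun μ a => (if μ 0 = 1 then ℓ * B a v.1 else 0) + (if μ 0 = 1 then ℓ * B a w.1 else 0))
          (by intro μ a; split_ifs <;> simp [mul_add]),
        Finsupp.sum_add, Finsupp.sum_add]
    exact ⟨by rw [smul_add]; abel, by ring⟩
  · intro c v
    simp only [torAct, Prod.smul_fst, Prod.smul_snd, Prod.smul_mk, smul_add, Prod.mk.injEq]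
    rw [sum_eq f (fun μ a => if μ 0 = 0 then ⁅a, c • v.1⁆ else 0)
          (fun μ a => c • (if μ 0 = 0 then ⁅a, v.1⁆ else 0)) (by intro μ a; split_ifs <;> simp),
        sum_eq f (fun μ a => if μ 0 = 1 then ℓ * B a (c • v.1) else 0)
          (fun μ a => c • (if μ 0 = 1 then ℓ * B a v.1 else 0))
          (by intro μ a; split_ifs <;> simp; ring),
        ← Finsupp.smul_sum, ← Finsupp.smul_sum]
    refine ⟨by module, ?_⟩
    have hcs : ∀ x y : ℂ, x • y = x * y := fun _ _ => rfl
    simp only [hcs]; ring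

lemma act_add_X (X Y : TorL r g) (v : g × ℂ) :
    torAct r g B ℓ (X + Y) v = torAct r g B ℓ X v + torAct r g B ℓ Y v := by
  simp only [torAct, Prod.fst_add, Prod.snd_add, Prod.mk_add_mk, Prod.mk.injEq]
  rw [Finsupp.sum_add_index' (by simp) (by intro a b c; split_ifs <;> simp [add_lie]),
      Finsupp.sum_add_index' (by simp) (by intro a b c; split_ifs <;> simp [mul_add])]
  exact ⟨by module, by ring⟩

lemma act_smul_X (c : ℂ) (X : TorL r g) (v : g × ℂ) :
    torAct r g B ℓ (c • X) v = c • torAct r g B ℓ X v := by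
  obtain ⟨f, s⟩ := X
  simp only [torAct, Prod.smul_fst, Prod.smul_snd, Prod.smul_mk, smul_add, Prod.mk.injEq]
  rw [Finsupp.sum_smul_index' (by simp), Finsupp.sum_smul_index' (by simp),
      sum_eq f (fun μ a => if μ 0 = 0 then ⁅c • a, v.1⁆ else 0)
        (fun μ a => c • (if μ 0 = 0 then ⁅a, v.1⁆ else 0)) (by intro μ a; split_ifs <;> simp),
      sum_eq f (fun μ a => if μ 0 = 1 then ℓ * B (c • a) v.1 else 0)
        (fun μ a => c • (if μ 0 = 1 then ℓ * B a v.1 else 0))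
        (by intro μ a; split_ifs <;> simp; ring),
      ← Finsupp.smul_sum, ← Finsupp.smul_sum]
  have hcs : c • s = c * s := rfl
  rw [hcs]
  refine ⟨by module, ?_⟩
  simp [smul_mul_assoc, mul_assoc]

lemma br_central_left (s : ℂ) (Y : TorL r g) :
    torBracket r g B ((0 : (Fin (r+1) → ℤ) →₀ g), s) Y = 0 := by
  simp [torBracket, Finsupp.sum_zero_index, Prod.ext_iff]

lemma br_central_right (X : TorL r g) (t : ℂ) :
    torBracket r g B X ((0 : (Fin (r+1) → ℤ) →₀ g), t) = 0 := by
  simp [torBracket, Finsupp.sum_zero_index, Prod.ext_iff]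

lemma br_single_single (μ ν : Fin (r+1) → ℤ) (a b : g) :
    torBracket r g B (Finsupp.single μ a, 0) (Finsupp.single ν b, 0)
      = (Finsupp.single (μ + ν) ⁅a, b⁆,
          if μ + ν = 0 then ((μ 0 : ℂ)) * B a b else 0) := by
  simp only [torBracket]
  rw [Finsupp.sum_single_index (by simp [Finsupp.sum_single_index]),
      Finsupp.sum_single_index (by simp),
      Finsupp.sum_single_index (by simp [Finsupp.sum_single_index]),
      Finsupp.sum_single_index (by simp)]

lemma br_add_left (X Y Z : TorL r g) :
    torBracket r g B (X + Y) Z = torBracket r g B X Z + torBracket r g B Y Z := by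
  simp only [torBracket, Prod.fst_add, Prod.mk_add_mk, Prod.mk.injEq]
  refine ⟨?_, ?_⟩
  · exact Finsupp.sum_add_index' (by simp) (by
      intro μ a a'
      rw [← Finsupp.sum_add]
      exact sum_eq Z.1 _ _ (by intro ν b; simp [add_lie, Finsupp.single_add]))
  · exact Finsupp.sum_add_index' (by simp) (by
      intro μ a a'
      rw [← Finsupp.sum_add]
      exact sum_eq Z.1 _ _ (by intro ν b; simp only [map_add, LinearMap.add_apply, mul_add]; split_ifs <;> simp))

lemma br_add_right (X Z W : TorL r g) :
    torBracket r g B X (Z + W) = torBracket r g B X Z + torBracket r g B X W := by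
  simp only [torBracket, Prod.fst_add, Prod.mk_add_mk, Prod.mk.injEq]
  refine ⟨?_, ?_⟩
  · rw [sum_eq X.1 _ (fun μ a => (Z.1.sum fun ν b => Finsupp.single (μ+ν) ⁅a,b⁆)
        + (W.1.sum fun ν b => Finsupp.single (μ+ν) ⁅a,b⁆))
        (by intro μ a;
            exact Finsupp.sum_add_index' (by simp)
              (by intro ν b b'; simp [lie_add, Finsupp.single_add])),
      Finsupp.sum_add]
  · rw [sum_eq X.1 _ (fun μ a => (Z.1.sum fun ν b => if μ+ν = 0 then ((μ 0 : ℂ)) * B a b else 0)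
        + (W.1.sum fun ν b => if μ+ν = 0 then ((μ 0 : ℂ)) * B a b else 0))
        (by intro μ a;
            exact Finsupp.sum_add_index' (by simp)
              (by intro ν b b'; split_ifs <;> simp [mul_add])),
      Finsupp.sum_add]

section Compat

lemma compat_single_single (hinv : ∀ a b c : g, B ⁅a, b⁆ c = B a ⁅b, c⁆) (μ ν : Fin (r+1) → ℤ) (hμ : 0 ≤ μ 0) (hν : 0 ≤ ν 0)
    (a b : g) (v : g × ℂ) :
    torAct r g B ℓ (torBracket r g B (Finsupp.single μ a, 0) (Finsupp.single ν b, 0)) v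
      = torAct r g B ℓ (Finsupp.single μ a, 0) (torAct r g B ℓ (Finsupp.single ν b, 0) v)
        - torAct r g B ℓ (Finsupp.single ν b, 0) (torAct r g B ℓ (Finsupp.single μ a, 0) v) := by
  obtain ⟨v1, v2⟩ := v
  rw [br_single_single]
  have h2 : (if μ + ν = 0 then ((μ 0 : ℂ)) * B a b else 0) = 0 := by
    split_ifs with h
    · have h0 : μ 0 + ν 0 = 0 := by
        have := congrFun h 0; simpa using this
      have : μ 0 = 0 := by omega
      simp [this]
    · rfl
  rw [h2]
  simp only [act_single B ℓ]
  simp only [Pi.add_apply, Prod.mk_sub_mk, Prod.mk.injEq]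
  refine ⟨?_, ?_⟩
  · split_ifs <;> first | omega | simp [lie_lie]
  · split_ifs <;>
      first
      | omega
      | (rw [hinv a b v1]; ring1)
      | (rw [← lie_skew a b, map_neg, LinearMap.neg_apply, hinv b a v1]; ring1)
      | (rw [← lie_skew b a, map_neg, LinearMap.neg_apply, hinv a b v1]; ring1)
      | (simp [hinv a b v1]; done)
      | (simp only [map_zero, mul_zero, zero_sub, sub_zero]
         rw [← lie_skew a b, map_neg, LinearMap.neg_apply, hinv b a v1]
         ring1)
      | (simp; done)
      | simp

lemma compat_central_left (s : ℂ) (Y : TorL r g) (v : g × ℂ) :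
    torAct r g B ℓ (torBracket r g B ((0 : (Fin (r+1) → ℤ) →₀ g), s) Y) v
      = torAct r g B ℓ ((0 : (Fin (r+1) → ℤ) →₀ g), s) (torAct r g B ℓ Y v)
        - torAct r g B ℓ Y (torAct r g B ℓ ((0 : (Fin (r+1) → ℤ) →₀ g), s) v) := by
  rw [br_central_left, act_zero, act_central, act_central,
      (act_linear_v B ℓ Y).map_smul, sub_self]

lemma compat_central_right (X : TorL r g) (t : ℂ) (v : g × ℂ) :
    torAct r g B ℓ (torBracket r g B X ((0 : (Fin (r+1) → ℤ) →₀ g), t)) v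
      = torAct r g B ℓ X (torAct r g B ℓ ((0 : (Fin (r+1) → ℤ) →₀ g), t) v)
        - torAct r g B ℓ ((0 : (Fin (r+1) → ℤ) →₀ g), t) (torAct r g B ℓ X v) := by
  rw [br_central_right, act_zero, act_central, act_central,
      (act_linear_v B ℓ X).map_smul, sub_self]

lemma compat_add_left {X Y Z : TorL r g} {v : g × ℂ}
    (hX : torAct r g B ℓ (torBracket r g B X Z) v
      = torAct r g B ℓ X (torAct r g B ℓ Z v) - torAct r g B ℓ Z (torAct r g B ℓ X v))
    (hY : torAct r g B ℓ (torBracket r g B Y Z) v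
      = torAct r g B ℓ Y (torAct r g B ℓ Z v) - torAct r g B ℓ Z (torAct r g B ℓ Y v)) :
    torAct r g B ℓ (torBracket r g B (X + Y) Z) v
      = torAct r g B ℓ (X + Y) (torAct r g B ℓ Z v)
        - torAct r g B ℓ Z (torAct r g B ℓ (X + Y) v) := by
  rw [br_add_left, act_add_X, hX, hY, act_add_X, act_add_X,
      (act_linear_v B ℓ Z).map_add]
  abel

lemma compat_add_right {X Z W : TorL r g} {v : g × ℂ}
    (hZ : torAct r g B ℓ (torBracket r g B X Z) v
      = torAct r g B ℓ X (torAct r g B ℓ Z v) - torAct r g B ℓ Z (torAct r g B ℓ X v))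
    (hW : torAct r g B ℓ (torBracket r g B X W) v
      = torAct r g B ℓ X (torAct r g B ℓ W v) - torAct r g B ℓ W (torAct r g B ℓ X v)) :
    torAct r g B ℓ (torBracket r g B X (Z + W)) v
      = torAct r g B ℓ X (torAct r g B ℓ (Z + W) v)
        - torAct r g B ℓ (Z + W) (torAct r g B ℓ X v) := by
  rw [br_add_right, act_add_X, hZ, hW, act_add_X, act_add_X,
      (act_linear_v B ℓ X).map_add]
  abel

lemma compat_single_right (hinv : ∀ a b c : g, B ⁅a, b⁆ c = B a ⁅b, c⁆)
    (ν : Fin (r+1) → ℤ) (hν : 0 ≤ ν 0) (b : g) :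
    ∀ f : (Fin (r+1) → ℤ) →₀ g, (∀ μ ∈ f.support, 0 ≤ μ 0) → ∀ (s : ℂ) (v : g × ℂ),
      torAct r g B ℓ (torBracket r g B (f, s) (Finsupp.single ν b, 0)) v
        = torAct r g B ℓ (f, s) (torAct r g B ℓ (Finsupp.single ν b, 0) v)
          - torAct r g B ℓ (Finsupp.single ν b, 0) (torAct r g B ℓ (f, s) v) := by
  intro f
  induction f using Finsupp.induction with
  | zero => exact fun _ s v => compat_central_left B ℓ s _ v
  | single_add μ a f' hμf' ha0 ih =>
    intro hpos s v
    have hf'0 : f' μ = 0 := Finsupp.notMem_support_iff.mp hμf'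
    have h1 : 0 ≤ μ 0 := by
      refine hpos μ (Finsupp.mem_support_iff.mpr ?_)
      simp [Finsupp.add_apply, hf'0, ha0]
    have h2 : ∀ κ ∈ f'.support, 0 ≤ κ 0 := by
      intro κ hκ
      have hκμ : κ ≠ μ := fun h => hμf' (h ▸ hκ)
      refine hpos κ (Finsupp.mem_support_iff.mpr ?_)
      simp [Finsupp.add_apply, Finsupp.single_eq_of_ne' (Ne.symm hκμ),
        Finsupp.mem_support_iff.mp hκ]
    have hdec : ((Finsupp.single μ a + f', s) : TorL r g)
        = ((Finsupp.single μ a, 0) : TorL r g) + (f', s) := by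
      simp [Prod.ext_iff]
    rw [hdec]
    exact compat_add_left B ℓ (compat_single_single B ℓ hinv μ ν h1 hν a b v)
      (ih h2 s v)

lemma compat_main (hinv : ∀ a b c : g, B ⁅a, b⁆ c = B a ⁅b, c⁆)
    (X : TorL r g) (hX : TorPos X) :
    ∀ g' : (Fin (r+1) → ℤ) →₀ g, (∀ ν ∈ g'.support, 0 ≤ ν 0) → ∀ (t : ℂ) (v : g × ℂ),
      torAct r g B ℓ (torBracket r g B X (g', t)) v
        = torAct r g B ℓ X (torAct r g B ℓ (g', t) v)
          - torAct r g B ℓ (g', t) (torAct r g B ℓ X v) := by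
  intro g'
  induction g' using Finsupp.induction with
  | zero => exact fun _ t v => compat_central_right B ℓ X t v
  | single_add ν b g'' hνg'' hb0 ih =>
    intro hpos t v
    have hg''0 : g'' ν = 0 := Finsupp.notMem_support_iff.mp hνg''
    have h1 : 0 ≤ ν 0 := by
      refine hpos ν (Finsupp.mem_support_iff.mpr ?_)
      simp [Finsupp.add_apply, hg''0, hb0]
    have h2 : ∀ κ ∈ g''.support, 0 ≤ κ 0 := by
      intro κ hκ
      have hκν : κ ≠ ν := fun h => hνg'' (h ▸ hκ)
      refine hpos κ (Finsupp.mem_support_iff.mpr ?_)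
      simp [Finsupp.add_apply, Finsupp.single_eq_of_ne' (Ne.symm hκν),
        Finsupp.mem_support_iff.mp hκ]
    have hdec : ((Finsupp.single ν b + g'', t) : TorL r g)
        = ((Finsupp.single ν b, 0) : TorL r g) + (g'', t) := by
      simp [Prod.ext_iff]
    rw [hdec]
    exact compat_add_right B ℓ
      (compat_single_right B ℓ hinv ν h1 b X.1 hX X.2 v)
      (ih h2 t v)

lemma repr_X (X : TorL r g) :
    X = (∑ μ ∈ X.1.support, ((Finsupp.single μ (X.1 μ), 0) : TorL r g))
        + X.2 • (((0 : (Fin (r+1) → ℤ) →₀ g), (1 : ℂ)) : TorL r g) := by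
  refine Prod.ext ?_ ?_
  · simp only [Prod.fst_add, Prod.fst_sum, Prod.smul_fst, smul_zero, add_zero]
    exact (Finsupp.sum_single X.1).symm
  · simp [Prod.snd_sum]

lemma act_formula (φ : TorL r g → g × ℂ → g × ℂ)
    (hlin : ∀ v : g × ℂ, IsLinearMap ℂ (fun X : TorL r g => φ X v))
    (hgen : ∀ (μ : Fin (r+1) → ℤ) (a : g), 0 ≤ μ 0 → ∀ (b : g) (c2 : ℂ),
      φ (Finsupp.single μ a, 0) (b, c2)
        = (if μ 0 = 0 then ⁅a, b⁆ else 0, if μ 0 = 1 then ℓ * B a b else 0))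
    (hcent : ∀ v : g × ℂ, φ ((0 : (Fin (r+1) → ℤ) →₀ g), (1 : ℂ)) v = ℓ • v)
    (X : TorL r g) (hX : TorPos X) (v : g × ℂ) :
    φ X v = (∑ μ ∈ X.1.support,
        ((if μ 0 = 0 then ⁅X.1 μ, v.1⁆ else 0, if μ 0 = 1 then ℓ * B (X.1 μ) v.1 else 0) : g × ℂ))
      + X.2 • ℓ • v := by
  let L : TorL r g →ₗ[ℂ] g × ℂ := IsLinearMap.mk' (fun X : TorL r g => φ X v) (hlin v)
  have hL : ∀ Y : TorL r g, φ Y v = L Y := fun _ => rfl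
  rw [hL]
  conv_lhs => rw [repr_X X]
  rw [map_add, map_sum, map_smul]
  congr 1
  · refine Finset.sum_congr rfl ?_
    intro μ hμ
    rw [← hL, show v = (v.1, v.2) from rfl, hgen μ (X.1 μ) (hX μ hμ) v.1 v.2]
  · rw [← hL, hcent]

end Compat

end Aux


/-- `g ⊕ ℂ` carries a module structure over `L̂_+ ⊕ ℂk`, uniquely determined by
the listed formulas on generators, with `k` acting as `ℓ`; moreover the module
is ℕ-graded with `ℂ` in degree 0 and `g` in degree 1. -/
theorem stmt17 (r : ℕ) (g : Type*) [LieRing g] [LieAlgebra ℂ g]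
    (B : g →ₗ[ℂ] g →ₗ[ℂ] ℂ)
    (hsymm : ∀ a b : g, B a b = B b a)
    (hinv : ∀ a b c : g, B ⁅a, b⁆ c = B a ⁅b, c⁆)
    (ℓ : ℂ) :
    -- generator formulas
    (∀ (μ : Fin (r+1) → ℤ) (a b : g) (c2 : ℂ),
      torAct r g B ℓ (Finsupp.single μ a, 0) (b, c2)
        = (if μ 0 = 0 then ⁅a, b⁆ else 0, if μ 0 = 1 then ℓ * B a b else 0)) ∧
    (∀ v : g × ℂ, torAct r g B ℓ (0, 1) v = ℓ • v) ∧
    -- bilinearity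
    (∀ X : TorL r g, IsLinearMap ℂ (torAct r g B ℓ X)) ∧
    (∀ v : g × ℂ, IsLinearMap ℂ (fun X : TorL r g => torAct r g B ℓ X v)) ∧
    -- module compatibility with the bracket, on the subalgebra
    (∀ X Y : TorL r g, TorPos X → TorPos Y → ∀ v : g × ℂ,
      torAct r g B ℓ (torBracket r g B X Y) v
        = torAct r g B ℓ X (torAct r g B ℓ Y v)
          - torAct r g B ℓ Y (torAct r g B ℓ X v)) ∧
    -- uniqueness
    (∀ φ : TorL r g → g × ℂ → g × ℂ,
      (∀ v : g × ℂ, IsLinearMap ℂ (fun X : TorL r g => φ X v)) →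
      (∀ (μ : Fin (r+1) → ℤ) (a : g), 0 ≤ μ 0 → ∀ (b : g) (c2 : ℂ),
        φ (Finsupp.single μ a, 0) (b, c2)
          = (if μ 0 = 0 then ⁅a, b⁆ else 0, if μ 0 = 1 then ℓ * B a b else 0)) →
      (∀ v : g × ℂ, φ (0, 1) v = ℓ • v) →
      ∀ X : TorL r g, TorPos X → φ X = torAct r g B ℓ X) ∧
    -- ℕ-grading: ℂ in degree 0, g in degree 1
    (∀ (μ : Fin (r+1) → ℤ) (a : g) (c2 : ℂ),
      torAct r g B ℓ (Finsupp.single μ a, 0) (0, c2) = 0) ∧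
    (∀ (μ : Fin (r+1) → ℤ) (a b : g), 2 ≤ μ 0 →
      torAct r g B ℓ (Finsupp.single μ a, 0) (b, 0) = 0) ∧
    (∀ (μ : Fin (r+1) → ℤ) (a b : g), μ 0 = 0 →
      (torAct r g B ℓ (Finsupp.single μ a, 0) (b, 0)).2 = 0) ∧
    (∀ (μ : Fin (r+1) → ℤ) (a b : g), μ 0 = 1 →
      (torAct r g B ℓ (Finsupp.single μ a, 0) (b, 0)).1 = 0) := by
  have hcent1 : ∀ v : g × ℂ,
      torAct r g B ℓ ((0 : (Fin (r+1) → ℤ) →₀ g), (1 : ℂ)) v = ℓ • v := by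
    intro v; rw [act_central B ℓ 1 v, one_mul]
  have hlinX : ∀ v : g × ℂ, IsLinearMap ℂ (fun X : TorL r g => torAct r g B ℓ X v) :=
    fun v => ⟨fun X Y => act_add_X B ℓ X Y v, fun c X => act_smul_X B ℓ c X v⟩
  refine ⟨fun μ a b c2 => act_single B ℓ μ a b c2, hcent1, act_linear_v B ℓ, hlinX,
    ?_, ?_, ?_, ?_, ?_, ?_⟩
  · intro X Y hX hY v
    obtain ⟨g', t⟩ := Y
    exact compat_main B ℓ hinv X hX g' hY t v
  · intro φ hlin hgen hcentφ X hX
    funext v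
    rw [act_formula B ℓ φ hlin hgen hcentφ X hX v,
      ← act_formula B ℓ (torAct r g B ℓ) hlinX
        (fun μ a _ b c2 => act_single B ℓ μ a b c2) hcent1 X hX v]
  · intro μ a c2
    rw [act_single]
    simp [Prod.ext_iff]
  · intro μ a b hμ
    have h1 : ¬ μ 0 = 0 := by omega
    have h2 : ¬ μ 0 = 1 := by omega
    rw [act_single]
    simp [h1, h2, Prod.ext_iff]
  · intro μ a b hμ
    rw [act_single]
    simp [hμ]
  · intro μ a b hμ
    rw [act_single]
    simp [hμ]
end
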